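/- Let 0 < p < 1 and f(z) = p ∑_{n=0}^∞ ρ^{2n²}(n+1) zⁿ where ρ² = p. Then f is entire and satisfies f(z) − 2ρ²z f(qz) + q²z² f(q²z) = p for all z, where q = p² = ρ⁴. -/
import Mathlib

/-- Shift a sum by `k`: padding with zeros in front doesn't change the sum. -/
lemma shift_hasSum {u : ℕ → ℂ} {s : ℂ} (k : ℕ) (h : HasSum u s) :
    HasSum (fun n => if k ≤ n then u (n - k) else 0) s := by
  have hi : Function.Injective (fun n : ℕ => n + k) := add_left_injective k
  rw [← Function.Injective.hasSum_iff hi]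
  · convert h using 1
    funext n
    simp [Nat.le_add_left]
  · intro x hx
    have hxk : ¬ k ≤ x := by
      intro hc
      exact hx ⟨x - k, by simp [Nat.sub_add_cancel hc]⟩
    simp [hxk]

/-- The key coefficient identity. -/
lemma key_identity (r w : ℂ) (m : ℕ) :
    r ^ 2 * (r ^ (2 * (m + 2) ^ 2) * ((m : ℂ) + 2 + 1)) * w ^ (m + 2)
      - 2 * r ^ 2 * w * (r ^ 2 * (r ^ (2 * (m + 1) ^ 2) * ((m : ℂ) + 1 + 1)) * (r ^ 4 * w) ^ (m + 1))
      + (r ^ 4) ^ 2 * w ^ 2 * (r ^ 2 * (r ^ (2 * m ^ 2) * ((m : ℂ) + 1)) * ((r ^ 4) ^ 2 * w) ^ m)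
      = 0 := by
  have A1 : r ^ (2 * (m + 2) ^ 2) = r ^ (2 * m ^ 2) * r ^ (4 * m) * r ^ (4 * m) * r ^ 8 := by
    rw [← pow_add, ← pow_add, ← pow_add]; congr 1 <;> ring
  have A2 : r ^ (2 * (m + 1) ^ 2) = r ^ (2 * m ^ 2) * r ^ (4 * m) * r ^ 2 := by
    rw [← pow_add, ← pow_add]; congr 1 <;> ring
  have A3 : (r ^ 4) ^ (m + 1) = r ^ (4 * m) * r ^ 4 := by
    rw [← pow_mul, ← pow_add]; congr 1 <;> ring
  have A4 : ((r ^ 4) ^ 2) ^ m = r ^ (4 * m) * r ^ (4 * m) := by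
    rw [← pow_mul, ← pow_mul, ← pow_add]; congr 1 <;> ring
  have A5 : w ^ (m + 2) = w ^ m * w * w := by rw [pow_succ, pow_succ]
  have A6 : w ^ (m + 1) = w ^ m * w := pow_succ w m
  rw [A1, A2, mul_pow, A3, mul_pow, A4, A5, A6]
  ring

/-- The entire function `f(z) = p ∑ ρ^{2n²}(n+1) zⁿ` with `ρ² = p`, `q = p²`,
satisfies `f(z) − 2ρ²z f(qz) + q²z² f(q²z) = p`. -/
theorem entire_solution_double_root (p ρ q : ℝ) (hp0 : 0 < p) (hp1 : p < 1)
    (hρ : 0 < ρ) (hρp : ρ ^ 2 = p) (hq : q = p ^ 2)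
    (f : ℂ → ℂ)
    (hf : ∀ z : ℂ, HasSum (fun n : ℕ => (p : ℂ) * ((ρ : ℂ) ^ (2 * n ^ 2) * (n + 1)) * z ^ n) (f z)) :
    Differentiable ℂ f ∧
    ∀ z : ℂ, f z - 2 * (ρ : ℂ) ^ 2 * z * f ((q : ℂ) * z) +
      (q : ℂ) ^ 2 * z ^ 2 * f ((q : ℂ) ^ 2 * z) = (p : ℂ) := by
  set a : ℕ → ℂ := fun n => (p : ℂ) * ((ρ : ℂ) ^ (2 * n ^ 2) * (n + 1)) with ha
  have hpρ : (p : ℂ) = (ρ : ℂ) ^ 2 := by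
    rw [← hρp]; push_cast; ring
  have hqρ : (q : ℂ) = (ρ : ℂ) ^ 4 := by
    rw [hq, ← hρp]; push_cast; ring
  constructor
  · -- Differentiability via formal power series
    set F : FormalMultilinearSeries ℂ ℂ ℂ :=
      fun n => ContinuousMultilinearMap.mkPiRing ℂ (Fin n) (a n) with hF
    have hrad : F.radius = ⊤ := by
      apply FormalMultilinearSeries.radius_eq_top_of_summable_norm
      intro r
      have hs : Summable (fun n => a n * ((r : ℝ) : ℂ) ^ n) := (hf _).summable
      have hs' : Summable (fun n => ‖a n * ((r : ℝ) : ℂ) ^ n‖) :=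
        summable_norm_iff.mpr hs
      convert hs' using 2 with n
      rw [hF]
      simp [norm_mul, norm_pow, Complex.norm_real, abs_of_nonneg r.2]
    have hfF : f = F.sum := by
      funext z
      have h1 : HasSum (fun n => a n * z ^ n) (f z) := hf z
      have h2 : F.sum z = ∑' n, a n * z ^ n := by
        unfold FormalMultilinearSeries.sum
        congr 1
        funext n
        rw [hF]
        simp [ContinuousMultilinearMap.mkPiRing_apply, Finset.prod_const, smul_eq_mul]
        ring
      rw [h2, h1.tsum_eq]
    intro z
    have hb : HasFPowerSeriesOnBall F.sum F 0 F.radius :=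
      F.hasFPowerSeriesOnBall (by rw [hrad]; exact ENNReal.zero_lt_top)
    have : AnalyticAt ℂ F.sum z := hb.analyticAt_of_mem (by rw [hrad]; simp)
    rw [hfF]
    exact this.differentiableAt
  · -- Functional equation
    intro z
    have h1 : HasSum (fun n => a n * z ^ n) (f z) := hf z
    have h2 : HasSum (fun n => 2 * (ρ : ℂ) ^ 2 * z * (a n * ((q : ℂ) * z) ^ n))
        (2 * (ρ : ℂ) ^ 2 * z * f ((q : ℂ) * z)) := (hf _).mul_left _
    have h3 : HasSum (fun n => (q : ℂ) ^ 2 * z ^ 2 * (a n * ((q : ℂ) ^ 2 * z) ^ n))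
        ((q : ℂ) ^ 2 * z ^ 2 * f ((q : ℂ) ^ 2 * z)) := (hf _).mul_left _
    have h2' := shift_hasSum 1 h2
    have h3' := shift_hasSum 2 h3
    have H := (h1.sub h2').add h3'
    have Hp : HasSum (fun n : ℕ => if n = 0 then (p : ℂ) else 0) (p : ℂ) :=
      hasSum_ite_eq 0 (p : ℂ)
    have heq : (fun n : ℕ =>
        a n * z ^ n - (if 1 ≤ n then 2 * (ρ : ℂ) ^ 2 * z * (a (n - 1) * ((q : ℂ) * z) ^ (n - 1)) else 0)
          + (if 2 ≤ n then (q : ℂ) ^ 2 * z ^ 2 * (a (n - 2) * ((q : ℂ) ^ 2 * z) ^ (n - 2)) else 0))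
        = (fun n : ℕ => if n = 0 then (p : ℂ) else 0) := by
      funext n
      match n with
      | 0 => simp [ha]
      | 1 =>
        simp only [ha, hqρ, hpρ]
        norm_num
        ring
      | (m + 2) =>
        have hm1 : 1 ≤ m + 2 := by omega
        have hm2 : 2 ≤ m + 2 := by omega
        simp only [if_pos hm1, if_pos hm2, if_neg (by omega : ¬ (m + 2 = 0))]
        have : m + 2 - 1 = m + 1 := by omega
        rw [this, show m + 2 - 2 = m from by omega]
        simp only [ha, hqρ, hpρ]
        push_cast
        have := key_identity (ρ : ℂ) z m
        linear_combination this
    rw [heq] at H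
    exact H.unique Hp
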